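/- If an Eulerian multigraph G contains two edge-disjoint cycles that have more than two vertices in common, then c(G) < ν(G), i.e., G admits cycle decompositions of at least two different sizes. -/

import Mathlib

open scoped Classical

/-- A finite multigraph without loops: a vertex type, an edge type, and an
incidence map assigning to each edge an unordered pair of distinct vertices. -/
structure MGraph where
  V : Type
  E : Type
  finV : Finite V
  finE : Finite E
  ends : E → Sym2 V
  noLoop : ∀ e, ¬ (ends e).IsDiag

namespace MGraph

variable (G : MGraph)

/-- Degree of a vertex counting only edges in the edge set `F`. -/
noncomputable def degOn (F : Set G.E) (v : G.V) : ℕ := {e | e ∈ F ∧ v ∈ G.ends e}.ncard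

/-- Degree of a vertex. -/
noncomputable def deg (v : G.V) : ℕ := G.degOn Set.univ v

/-- Adjacency using only edges from `F`. -/
def AdjOn (F : Set G.E) (a b : G.V) : Prop := ∃ e ∈ F, G.ends e = s(a, b)

/-- Reachability using only edges from `F`. -/
def ReachOn (F : Set G.E) : G.V → G.V → Prop := Relation.ReflTransGen (G.AdjOn F)

/-- Connectivity of a multigraph. -/
def Connected : Prop := Nonempty G.V ∧ ∀ a b : G.V, G.ReachOn Set.univ a b

/-- A set of edges forms a cycle: it is nonempty, every vertex has degree 0 or 2
in it, and any two of its endpoints are joined by a path inside it. -/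
def IsCycle (C : Set G.E) : Prop :=
  C.Nonempty ∧ (∀ v, G.degOn C v = 0 ∨ G.degOn C v = 2) ∧
    ∀ e ∈ C, ∀ f ∈ C, ∀ a b : G.V, a ∈ G.ends e → b ∈ G.ends f → G.ReachOn C a b

/-- A cycle decomposition of the edge set `F`: a set of cycles inside `F` such
that every edge of `F` lies in exactly one of them. -/
def IsCycleDecompOn (F : Set G.E) (D : Set (Set G.E)) : Prop :=
  (∀ C ∈ D, G.IsCycle C ∧ C ⊆ F) ∧ ∀ e ∈ F, ∃! C, C ∈ D ∧ e ∈ C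

/-- A cycle decomposition of the graph. -/
def IsCycleDecomp (D : Set (Set G.E)) : Prop := G.IsCycleDecompOn Set.univ D

/-- Minimum number of cycles in a cycle decomposition of `F`. -/
noncomputable def cOn (F : Set G.E) : ℕ :=
  sInf {n | ∃ D, G.IsCycleDecompOn F D ∧ D.ncard = n}

/-- Maximum number of cycles in a cycle decomposition of `F`. -/
noncomputable def nuOn (F : Set G.E) : ℕ :=
  sSup {n | ∃ D, G.IsCycleDecompOn F D ∧ D.ncard = n}

/-- Minimum cycle number. -/
noncomputable def c : ℕ := G.cOn Set.univ

/-- Maximum cycle number. -/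
noncomputable def nu : ℕ := G.nuOn Set.univ

/-- A multigraph is Eulerian if it admits a closed walk traversing every edge
exactly once. -/
def IsEulerian : Prop :=
  ∃ (vs : List G.V) (es : List G.E),
    vs.length = es.length + 1 ∧
    (∀ (i : ℕ) (e : G.E) (a b : G.V), es[i]? = some e → vs[i]? = some a →
      vs[i + 1]? = some b → G.ends e = s(a, b)) ∧
    vs.head? = vs.getLast? ∧ es.Nodup ∧ ∀ e : G.E, e ∈ es

/-- A cut-edge (bridge): its endpoints are disconnected after its removal. -/
def IsBridge (e : G.E) : Prop :=
  ∃ a b, G.ends e = s(a, b) ∧ ¬ G.ReachOn {e}ᶜ a b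

/-- 2-edge-connectivity: connected and without cut-edges. -/
def TwoEdgeConnected : Prop := G.Connected ∧ ∀ e, ¬ G.IsBridge e

/-- Reachability avoiding a vertex. -/
def ReachAvoid (v : G.V) (a b : G.V) : Prop :=
  Relation.ReflTransGen (fun x y => x ≠ v ∧ y ≠ v ∧ G.AdjOn Set.univ x y) a b

/-- A cut-vertex: two vertices in the same component get separated by its removal. -/
def IsCutVertex (v : G.V) : Prop :=
  ∃ a b, a ≠ v ∧ b ≠ v ∧ G.ReachOn Set.univ a b ∧ ¬ G.ReachAvoid v a b

/-- Biconnected: connected, at least two vertices, and without cut-vertices. -/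
def Biconnected : Prop :=
  G.Connected ∧ 2 ≤ Nat.card G.V ∧ ∀ v, ¬ G.IsCutVertex v

/-- The vertices covered by a set of edges. -/
def VertexSetOf (C : Set G.E) : Set G.V := {v | ∃ e ∈ C, v ∈ G.ends e}

/-- No two edge-disjoint cycles share more than two vertices. -/
def NoTwoCyclesShareThree : Prop :=
  ∀ C1 C2 : Set G.E, G.IsCycle C1 → G.IsCycle C2 → Disjoint C1 C2 →
    (G.VertexSetOf C1 ∩ G.VertexSetOf C2).ncard ≤ 2

/-- An Eulerian multiedge: two vertices joined by an even positive number of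
parallel edges. -/
def IsEulerianMultiedge : Prop :=
  Nat.card G.V = 2 ∧ 0 < Nat.card G.E ∧ Even (Nat.card G.E)

end MGraph

/-- Isomorphism of multigraphs. -/
structure MIso (G H : MGraph) where
  vEquiv : G.V ≃ H.V
  eEquiv : G.E ≃ H.E
  ends_eq : ∀ e, H.ends (eEquiv e) = (G.ends e).map vEquiv

namespace MGraph

/-- Vertex-identification: glue `u1 ∈ V(G1)` with `u2 ∈ V(G2)`. -/
noncomputable def vertexIdent (G1 G2 : MGraph) (u1 : G1.V) (u2 : G2.V) : MGraph where
  V := G1.V ⊕ {v : G2.V // v ≠ u2}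
  E := G1.E ⊕ G2.E
  finV := by have := G1.finV; have := G2.finV; infer_instance
  finE := by have := G1.finE; have := G2.finE; infer_instance
  ends := fun e =>
    match e with
    | Sum.inl e => (G1.ends e).map Sum.inl
    | Sum.inr e => (G2.ends e).map
        (fun v => if h : v = u2 then Sum.inl u1 else Sum.inr ⟨v, h⟩)
  noLoop := by
    rintro (e | e) h
    · exact G1.noLoop e ((Sym2.isDiag_map Sum.inl_injective).mp h)
    · refine G2.noLoop e ((Sym2.isDiag_map ?_).mp h)
      intro a b hab
      by_cases ha : a = u2 <;> by_cases hb : b = u2 <;>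
        simp [ha, hb] at hab ⊢ <;> simp_all

/-- Edge-identification: delete `e1` and `e2` (with endpoints `u1, v1` resp.
`u2, v2`) and add the new edges `u1u2` and `v1v2`. -/
def edgeIdent (G1 G2 : MGraph) (e1 : G1.E) (e2 : G2.E)
    (u1 v1 : G1.V) (u2 v2 : G2.V) : MGraph where
  V := G1.V ⊕ G2.V
  E := {e : G1.E // e ≠ e1} ⊕ {e : G2.E // e ≠ e2} ⊕ Bool
  finV := by have := G1.finV; have := G2.finV; infer_instance
  finE := by have := G1.finE; have := G2.finE; infer_instance
  ends := fun e =>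
    match e with
    | Sum.inl e => (G1.ends e.1).map Sum.inl
    | Sum.inr (Sum.inl e) => (G2.ends e.1).map Sum.inr
    | Sum.inr (Sum.inr true) => s(Sum.inl u1, Sum.inr u2)
    | Sum.inr (Sum.inr false) => s(Sum.inl v1, Sum.inr v2)
  noLoop := by
    rintro (e | e | b) h
    · exact G1.noLoop e.1 ((Sym2.isDiag_map Sum.inl_injective).mp h)
    · exact G2.noLoop e.1 ((Sym2.isDiag_map Sum.inr_injective).mp h)
    · cases b <;> simp [Sym2.mk_isDiag_iff] at h

/-- Vertex-edge-identification: identify `v1` with `v2`, delete `e1 = u1v1`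
and `e2 = u2v2`, and add a new edge `u1u2`. -/
noncomputable def vertexEdgeIdent (G1 G2 : MGraph) (e1 : G1.E) (e2 : G2.E)
    (u1 v1 : G1.V) (u2 v2 : G2.V) (h2 : G2.ends e2 = s(u2, v2)) : MGraph where
  V := G1.V ⊕ {w : G2.V // w ≠ v2}
  E := {e : G1.E // e ≠ e1} ⊕ {e : G2.E // e ≠ e2} ⊕ Unit
  finV := by have := G1.finV; have := G2.finV; infer_instance
  finE := by have := G1.finE; have := G2.finE; infer_instance
  ends := fun e =>
    match e with
    | Sum.inl e => (G1.ends e.1).map Sum.inl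
    | Sum.inr (Sum.inl e) => (G2.ends e.1).map
        (fun w => if h : w = v2 then Sum.inl v1 else Sum.inr ⟨w, h⟩)
    | Sum.inr (Sum.inr _) =>
        s(Sum.inl u1, Sum.inr ⟨u2, fun h =>
          G2.noLoop e2 (by rw [h2, h]; exact Sym2.mk_isDiag_iff.mpr rfl)⟩)
  noLoop := by
    rintro (e | e | u) h
    · exact G1.noLoop e.1 ((Sym2.isDiag_map Sum.inl_injective).mp h)
    · refine G2.noLoop e.1 ((Sym2.isDiag_map ?_).mp h)
      intro a b hab
      by_cases ha : a = v2 <;> by_cases hb : b = v2 <;>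
        simp [ha, hb] at hab ⊢ <;> simp_all
    · simp [Sym2.mk_isDiag_iff] at h

/-- Delete an edge from a multigraph. -/
def deleteEdge (G : MGraph) (e : G.E) : MGraph where
  V := G.V
  E := {f : G.E // f ≠ e}
  finV := G.finV
  finE := by have := G.finE; infer_instance
  ends := fun f => G.ends f.1
  noLoop := fun f => G.noLoop f.1

/-- `Sym2.pmap`-style map into a subtype. -/
noncomputable def sym2Pmap {α β : Type} {p : α → Prop} (f : ∀ a, p a → β)
    (s : Sym2 α) (h : ∀ a ∈ s, p a) : Sym2 β :=
  let z := Classical.choose (Quot.exists_rep s)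
  s(f z.1 (h z.1 (by
      have hz : Quot.mk _ z = s := Classical.choose_spec (Quot.exists_rep s)
      rw [← hz]; exact Sym2.mem_mk_left z.1 z.2)),
    f z.2 (h z.2 (by
      have hz : Quot.mk _ z = s := Classical.choose_spec (Quot.exists_rep s)
      rw [← hz]; exact Sym2.mem_mk_right z.1 z.2)))

/-- Delete a vertex (and all incident edges) from a multigraph. -/
noncomputable def deleteVertex (G : MGraph) (v : G.V) : MGraph where
  V := {w : G.V // w ≠ v}
  E := {e : G.E // v ∉ G.ends e}
  finV := by have := G.finV; infer_instance
  finE := by have := G.finE; infer_instance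
  ends := fun e => sym2Pmap (fun a ha => (⟨a, ha⟩ : {w : G.V // w ≠ v}))
    (G.ends e.1) (fun a ha hav => e.2 (hav ▸ ha))
  noLoop := by
    rintro ⟨e, he⟩ h
    apply G.noLoop e
    unfold sym2Pmap at h
    have hz : Quot.mk _ (Classical.choose (Quot.exists_rep (G.ends e))) = G.ends e :=
      Classical.choose_spec (Quot.exists_rep (G.ends e))
    rw [Sym2.mk_isDiag_iff] at h
    have : (Classical.choose (Quot.exists_rep (G.ends e))).1 =
        (Classical.choose (Quot.exists_rep (G.ends e))).2 := congrArg Subtype.val h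
    rw [← hz]
    exact Sym2.mk_isDiag_iff.mpr this

end MGraph

/-- A tree decomposition of a multigraph: a tree of bags covering all vertices
and edges such that the bags containing a given vertex form a subtree. -/
structure TreeDecomp (G : MGraph) where
  ι : Type
  t : SimpleGraph ι
  isTree : t.IsTree
  bag : ι → Set G.V
  covers_vertex : ∀ v : G.V, ∃ i, v ∈ bag i
  covers_edge : ∀ e : G.E, ∃ i, ∀ v ∈ G.ends e, v ∈ bag i
  bags_connected : ∀ v : G.V, (SimpleGraph.induce {i | v ∈ bag i} t).Connected

namespace MGraph

/-- The graph has treewidth at most `k`. -/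
def twLE (G : MGraph) (k : ℕ) : Prop :=
  ∃ T : TreeDecomp G, ∀ i, (T.bag i).ncard ≤ k + 1

/-- Treewidth of a multigraph. -/
noncomputable def treewidth (G : MGraph) : ℕ := sInf {k | G.twLE k}

/-- The closed necklace on `n ≥ 2` vertices: a cycle of length `n` with all
of its edges doubled. -/
def necklace (n : ℕ) (hn : 2 ≤ n) : MGraph where
  V := ZMod n
  E := ZMod n × Bool
  finV := by have : NeZero n := ⟨by omega⟩; infer_instance
  finE := by have : NeZero n := ⟨by omega⟩; infer_instance
  ends := fun e => s(e.1, e.1 + 1)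
  noLoop := by
    have : Fact (1 < n) := ⟨hn⟩
    intro e h
    rw [Sym2.mk_isDiag_iff] at h
    exact one_ne_zero (left_eq_add.mp h)

end MGraph

namespace MGraph

variable (G : MGraph)

lemma ends_rep (e : G.E) : ∃ a b, a ≠ b ∧ G.ends e = s(a, b) := by
  obtain ⟨⟨a, b⟩, h⟩ := Quot.exists_rep (G.ends e)
  refine ⟨a, b, ?_, h.symm⟩
  intro hab
  exact G.noLoop e (by rw [← h, hab]; exact Sym2.mk_isDiag_iff.mpr rfl)

lemma degOn_eq (F : Set G.E) (v : G.V) :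
    G.degOn F v = {e | e ∈ F ∧ v ∈ G.ends e}.ncard := rfl

lemma degOn_empty (v : G.V) : G.degOn ∅ v = 0 := by
  simp [degOn]

lemma degOn_mono {A B : Set G.E} (h : A ⊆ B) (v : G.V) : G.degOn A v ≤ G.degOn B v := by
  have := G.finE
  exact Set.ncard_le_ncard (fun e he => ⟨h he.1, he.2⟩) (Set.toFinite _)

lemma degOn_union {A B : Set G.E} (h : Disjoint A B) (v : G.V) :
    G.degOn (A ∪ B) v = G.degOn A v + G.degOn B v := by
  have := G.finE
  have hs : {e | e ∈ A ∪ B ∧ v ∈ G.ends e} =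
      {e | e ∈ A ∧ v ∈ G.ends e} ∪ {e | e ∈ B ∧ v ∈ G.ends e} := by
    ext e; simp only [Set.mem_union, Set.mem_setOf_eq]; tauto
  have hdis : Disjoint {e | e ∈ A ∧ v ∈ G.ends e} {e | e ∈ B ∧ v ∈ G.ends e} :=
    Set.disjoint_left.mpr (fun e he1 he2 => Set.disjoint_left.mp h he1.1 he2.1)
  rw [degOn_eq, hs, Set.ncard_union_eq hdis (Set.toFinite _) (Set.toFinite _)]
  rfl

lemma degOn_sdiff {A B : Set G.E} (h : B ⊆ A) (v : G.V) :
    G.degOn A v = G.degOn (A \ B) v + G.degOn B v := by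
  rw [← G.degOn_union (Set.disjoint_sdiff_left) v, Set.diff_union_of_subset h]

lemma degOn_singleton (e : G.E) (v : G.V) :
    G.degOn {e} v = if v ∈ G.ends e then 1 else 0 := by
  by_cases h : v ∈ G.ends e
  · rw [if_pos h]
    have : {f | f ∈ ({e} : Set G.E) ∧ v ∈ G.ends f} = {e} := by
      ext f; simp only [Set.mem_singleton_iff, Set.mem_setOf_eq]
      constructor
      · rintro ⟨rfl, -⟩; rfl
      · rintro rfl; exact ⟨rfl, h⟩
    rw [degOn_eq, this, Set.ncard_singleton]
  · rw [if_neg h]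
    have : {f | f ∈ ({e} : Set G.E) ∧ v ∈ G.ends f} = ∅ := by
      refine Set.eq_empty_iff_forall_notMem.mpr ?_
      rintro f ⟨rfl, hv⟩; exact h hv
    rw [degOn_eq, this, Set.ncard_empty]

lemma degOn_pos {F : Set G.E} {v : G.V} :
    0 < G.degOn F v ↔ ∃ e ∈ F, v ∈ G.ends e := by
  have := G.finE
  rw [degOn_eq, Set.ncard_pos (Set.toFinite _)]
  constructor
  · rintro ⟨e, he⟩; exact ⟨e, he.1, he.2⟩
  · rintro ⟨e, he1, he2⟩; exact ⟨e, he1, he2⟩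

lemma degOn_pair {e f : G.E} (h : e ≠ f) (v : G.V) :
    G.degOn {e, f} v = (if v ∈ G.ends e then 1 else 0) + (if v ∈ G.ends f then 1 else 0) := by
  rw [show ({e, f} : Set G.E) = {e} ∪ {f} by rfl,
    G.degOn_union (by simp [h]) v, degOn_singleton, degOn_singleton]

lemma odd_degOn_symmDiff (A B : Set G.E) (v : G.V) :
    Odd (G.degOn (symmDiff A B) v) ↔ ¬ (Odd (G.degOn A v) ↔ Odd (G.degOn B v)) := by
  have := G.finE
  set X := {e | e ∈ A ∧ v ∈ G.ends e} with hX
  set Y := {e | e ∈ B ∧ v ∈ G.ends e} with hY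
  have hs : {e | e ∈ symmDiff A B ∧ v ∈ G.ends e} = (X ∪ Y) \ (X ∩ Y) := by
    ext e
    simp only [hX, hY, Set.mem_setOf_eq, Set.mem_diff, Set.mem_union, Set.mem_inter_iff,
      symmDiff_def, Set.sup_eq_union, Set.mem_union, Set.mem_diff]
    tauto
  have h1 : (X ∪ Y).ncard + (X ∩ Y).ncard = X.ncard + Y.ncard :=
    Set.ncard_union_add_ncard_inter X Y (Set.toFinite _) (Set.toFinite _)
  have h2 : ((X ∪ Y) \ (X ∩ Y)).ncard = (X ∪ Y).ncard - (X ∩ Y).ncard :=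
    Set.ncard_diff ((Set.inter_subset_left).trans Set.subset_union_left) (Set.toFinite _)
  have h3 : (X ∩ Y).ncard ≤ (X ∪ Y).ncard :=
    Set.ncard_le_ncard ((Set.inter_subset_left).trans Set.subset_union_left) (Set.toFinite _)
  rw [degOn_eq, hs, h2, degOn_eq G A, degOn_eq G B, ← hX, ← hY]
  rw [Nat.odd_iff, Nat.odd_iff, Nat.odd_iff]
  omega

end MGraph
namespace MGraph

variable (G : MGraph)

lemma adjOn_symm {F : Set G.E} {a b : G.V} (h : G.AdjOn F a b) : G.AdjOn F b a := by
  obtain ⟨e, he, hends⟩ := h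
  exact ⟨e, he, by rw [hends, Sym2.eq_swap]⟩

lemma reachOn_symm {F : Set G.E} {a b : G.V} (h : G.ReachOn F a b) : G.ReachOn F b a :=
  by haveI : Std.Symm (G.AdjOn F) := ⟨fun _ _ => G.adjOn_symm⟩; exact (Relation.ReflTransGen.symmetric (r := G.AdjOn F)).symm _ _ h

lemma reachOn_mono {F F' : Set G.E} (hFF : F ⊆ F') {a b : G.V} (h : G.ReachOn F a b) :
    G.ReachOn F' a b :=
  (Relation.ReflTransGen.mono (r := G.AdjOn F) (p := G.AdjOn F') (fun x y ⟨e, he, hh⟩ => ⟨e, hFF he, hh⟩)) a b h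

lemma reach_of_mem_ends {F : Set G.E} {e : G.E} (he : e ∈ F) {a b : G.V}
    (ha : a ∈ G.ends e) (hb : b ∈ G.ends e) : G.ReachOn F a b := by
  by_cases hab : a = b
  · exact hab ▸ Relation.ReflTransGen.refl
  · obtain ⟨p, q, hpq, hends⟩ := G.ends_rep e
    rw [hends, Sym2.mem_iff] at ha hb
    have : G.ends e = s(a, b) := by
      rcases ha with rfl | rfl <;> rcases hb with rfl | rfl
      · exact absurd rfl hab
      · exact hends
      · rw [hends, Sym2.eq_swap]
      · exact absurd rfl hab
    exact Relation.ReflTransGen.single ⟨e, he, this⟩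

lemma reach_deg_zero {F : Set G.E} {u w : G.V} (h : G.ReachOn F u w)
    (hw : G.degOn F w = 0) : u = w := by
  rcases Relation.ReflTransGen.cases_tail h with rfl | ⟨b, hub, hadj⟩
  · rfl
  · obtain ⟨e, he, hends⟩ := hadj
    exfalso
    have : 0 < G.degOn F w := G.degOn_pos.mpr ⟨e, he, by rw [hends]; exact Sym2.mem_mk_right _ _⟩
    omega

/-- Existence of a T-join between connected vertices. -/
lemma exists_join {F : Set G.E} {x y : G.V} (h : G.ReachOn F x y) :
    ∃ P ⊆ F, ∀ v, Odd (G.degOn P v) ↔ ¬ (v = x ↔ v = y) := by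
  induction h with
  | refl =>
    refine ⟨∅, Set.empty_subset _, fun v => ?_⟩
    simp [G.degOn_empty, Nat.odd_iff]
  | @tail b c hxb hadj ih =>
    obtain ⟨P, hPF, hP⟩ := ih
    obtain ⟨e, he, hends⟩ := hadj
    have hbc : b ≠ c := by
      intro hbc
      exact G.noLoop e (by rw [hends, hbc]; exact Sym2.mk_isDiag_iff.mpr rfl)
    refine ⟨symmDiff P {e}, ?_, fun v => ?_⟩
    · intro f hf
      have hsub : symmDiff P {e} ⊆ P ∪ {e} := symmDiff_le_sup
      rcases hsub hf with hf | hf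
      · exact hPF hf
      · rw [Set.mem_singleton_iff] at hf; exact hf ▸ he
    · rw [G.odd_degOn_symmDiff, hP v, G.degOn_singleton]
      have hmem : v ∈ G.ends e ↔ (v = b ∨ v = c) := by rw [hends, Sym2.mem_iff]
      by_cases hvb : v = b <;> by_cases hvc : v = c <;>
        by_cases hvx : v = x <;>
        simp only [hvb, hvc, hvx, hmem] <;> simp_all <;> omega

/-- Handshake-type lemma: there is no edge set with exactly one odd-degree vertex. -/
lemma handshake {S : Set G.E} {x : G.V} (hx : Odd (G.degOn S x))
    (h : ∀ v, v ≠ x → ¬ Odd (G.degOn S v)) : False := by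
  have := G.finE; have := G.finV
  have : Fintype G.V := Fintype.ofFinite _
  have : Fintype G.E := Fintype.ofFinite _
  have hdeg : ∀ v, G.degOn S v = (S.toFinset.filter (fun e => v ∈ G.ends e)).card := by
    intro v
    rw [degOn_eq]
    have : {e | e ∈ S ∧ v ∈ G.ends e} = ↑(S.toFinset.filter (fun e => v ∈ G.ends e)) := by
      ext e; simp [Set.mem_toFinset]
    rw [this, Set.ncard_coe_finset]
  have hsum : ∑ v, G.degOn S v = 2 * S.toFinset.card := by
    simp only [hdeg, Finset.card_filter]
    rw [Finset.sum_comm]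
    have : ∀ e ∈ S.toFinset, (∑ v, if v ∈ G.ends e then 1 else 0) = 2 := by
      intro e _
      obtain ⟨a, b, hab, hends⟩ := G.ends_rep e
      rw [← Finset.card_filter]
      have : Finset.univ.filter (fun v => v ∈ G.ends e) = {a, b} := by
        ext v; simp [hends, Sym2.mem_iff]
      rw [this, Finset.card_insert_of_notMem (by simp [hab]), Finset.card_singleton]
    rw [Finset.sum_congr rfl this, Finset.sum_const, smul_eq_mul, mul_comm]
  have hsplit : ∑ v, G.degOn S v =
      G.degOn S x + ∑ v ∈ Finset.univ.erase x, G.degOn S v := by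
    rw [← Finset.sum_erase_add _ _ (Finset.mem_univ x)]; ring
  have heven : Even (∑ v ∈ Finset.univ.erase x, G.degOn S v) := by
    rw [Finset.even_sum_iff_even_card_odd]
    have : (Finset.univ.erase x).filter (fun v => Odd (G.degOn S v)) = ∅ := by
      refine Finset.eq_empty_of_forall_notMem ?_
      intro v hv
      rw [Finset.mem_filter] at hv
      exact h v (Finset.ne_of_mem_erase hv.1) hv.2
    rw [this, Finset.card_empty]
    exact Even.zero
  obtain ⟨k, hk⟩ := hx
  obtain ⟨m, hm⟩ := heven
  omega

end MGraph
namespace MGraph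

variable (G : MGraph)

/-- The set of edges in `F` in the reachability component of `x`. -/
def compOf (F : Set G.E) (x : G.V) : Set G.E :=
  {f | f ∈ F ∧ ∃ a ∈ G.ends f, G.ReachOn F x a}

lemma compOf_subset (F : Set G.E) (x : G.V) : G.compOf F x ⊆ F := fun _ h => h.1

lemma degOn_compOf_of_reach {F : Set G.E} {x v : G.V} (h : G.ReachOn F x v) :
    G.degOn (G.compOf F x) v = G.degOn F v := by
  rw [degOn_eq, degOn_eq]
  congr 1
  ext e
  simp only [Set.mem_setOf_eq, compOf]
  constructor
  · rintro ⟨⟨he, -⟩, hv⟩; exact ⟨he, hv⟩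
  · rintro ⟨he, hv⟩; exact ⟨⟨he, v, hv, h⟩, hv⟩

lemma degOn_compOf_of_not_reach {F : Set G.E} {x v : G.V} (h : ¬ G.ReachOn F x v) :
    G.degOn (G.compOf F x) v = 0 := by
  rw [degOn_eq]
  have hemp : {e | e ∈ G.compOf F x ∧ v ∈ G.ends e} = ∅ := by
    refine Set.eq_empty_iff_forall_notMem.mpr ?_
    rintro e ⟨⟨he, a, ha, hra⟩, hv⟩
    exact h (hra.trans (G.reach_of_mem_ends he ha hv))
  rw [hemp, Set.ncard_empty]

/-- From an odd-degree vertex one can reach another odd-degree vertex. -/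
lemma exists_odd_reach {S : Set G.E} {x : G.V} (hx : Odd (G.degOn S x)) :
    ∃ y, y ≠ x ∧ Odd (G.degOn S y) ∧ G.ReachOn S x y := by
  by_contra hcon
  push_neg at hcon
  refine G.handshake (S := G.compOf S x) (x := x) ?_ ?_
  · rwa [G.degOn_compOf_of_reach Relation.ReflTransGen.refl]
  · intro v hv
    by_cases hr : G.ReachOn S x v
    · rw [G.degOn_compOf_of_reach hr]
      intro hodd
      exact (hcon v hv hodd) hr
    · rw [G.degOn_compOf_of_not_reach hr]
      simp [Nat.odd_iff]

/-- If the odd vertices are among `{x, y}` and `x` is odd, then `x` reaches `y`. -/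
lemma reach_of_odd {S : Set G.E} {x y : G.V} (hx : Odd (G.degOn S x))
    (h : ∀ v, v ≠ x → v ≠ y → ¬ Odd (G.degOn S v)) : G.ReachOn S x y := by
  obtain ⟨y', hy'x, hy'odd, hy'r⟩ := G.exists_odd_reach hx
  have : y' = y := by
    by_contra hne
    exact h y' hy'x hne hy'odd
  exact this ▸ hy'r

/-- Every nonempty edge set with all degrees even contains a cycle. -/
lemma exists_cycle {F : Set G.E} (hne : F.Nonempty) (hev : ∀ v, Even (G.degOn F v)) :
    ∃ C ⊆ F, G.IsCycle C := by
  have := G.finE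
  -- take a minimal nonempty even subset of F
  set T : Set ℕ := {k | ∃ Z, (Z ⊆ F ∧ Z.Nonempty ∧ ∀ v, Even (G.degOn Z v)) ∧ Z.ncard = k}
    with hT
  have hTne : T.Nonempty := ⟨F.ncard, ⟨F, ⟨le_refl F, hne, hev⟩, rfl⟩⟩
  obtain ⟨Z, ⟨hZF, hZne, hZev⟩, hZcard⟩ := Nat.sInf_mem hTne
  have hmin : ∀ Y, Y ⊆ Z → Y.Nonempty → (∀ v, Even (G.degOn Y v)) → Y = Z := by
    intro Y hYZ hYne hYev
    by_contra hne'
    have hlt : Y.ncard < Z.ncard := Set.ncard_lt_ncard (Set.ssubset_iff_subset_ne.mpr ⟨hYZ, hne'⟩)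
      (Set.toFinite _)
    have : Y.ncard ∈ T := ⟨Y, ⟨hYZ.trans hZF, hYne, hYev⟩, rfl⟩
    have := Nat.sInf_le this
    omega
  refine ⟨Z, hZF, hZne, ?_, ?_⟩
  · -- degrees are 0 or 2
    intro v
    by_contra hdeg
    push_neg at hdeg
    have hd4 : 4 ≤ G.degOn Z v := by
      obtain ⟨k, hk⟩ := hZev v
      omega
    -- two distinct edges at v
    have h2 : 1 < {e | e ∈ Z ∧ v ∈ G.ends e}.ncard := by rw [← degOn_eq]; omega
    obtain ⟨e1, he1, e2, he2, he12⟩ := (Set.one_lt_ncard (Set.toFinite _)).mp h2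
    obtain ⟨he1Z, he1v⟩ := he1
    obtain ⟨he2Z, he2v⟩ := he2
    obtain ⟨x, hx⟩ : ∃ x, G.ends e1 = s(v, x) ∧ x ≠ v := by
      obtain ⟨p, q, hpq, hends⟩ := G.ends_rep e1
      rw [hends, Sym2.mem_iff] at he1v
      rcases he1v with rfl | rfl
      · exact ⟨q, hends, fun h => hpq h.symm⟩
      · exact ⟨p, by rw [hends, Sym2.eq_swap], hpq⟩
    obtain ⟨x2, hx2⟩ : ∃ x2, G.ends e2 = s(v, x2) ∧ x2 ≠ v := by
      obtain ⟨p, q, hpq, hends⟩ := G.ends_rep e2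
      rw [hends, Sym2.mem_iff] at he2v
      rcases he2v with rfl | rfl
      · exact ⟨q, hends, fun h => hpq h.symm⟩
      · exact ⟨p, by rw [hends, Sym2.eq_swap], hpq⟩
    have hpairsub : ({e1, e2} : Set G.E) ⊆ Z := by
      rintro e (rfl | rfl) <;> assumption
    by_cases hxx : x = x2
    · -- Y = {e1, e2} is a proper nonempty even subset
      subst hxx
      have hYev : ∀ w, Even (G.degOn {e1, e2} w) := by
        intro w
        rw [G.degOn_pair he12, hx.1, hx2.1]
        by_cases h1 : w ∈ (s(v, x) : Sym2 G.V) <;> simp [h1]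
      have hYeq := hmin {e1, e2} hpairsub ⟨e1, by simp⟩ hYev
      have : G.degOn {e1, e2} v = 2 := by
        rw [G.degOn_pair he12, hx.1, hx2.1]
        simp
      rw [hYeq] at this
      omega
    · -- x ≠ x2
      set Z' := Z \ {e1, e2} with hZ'
      have hdegZ' : ∀ w, G.degOn Z w = G.degOn Z' w + G.degOn {e1, e2} w :=
        fun w => G.degOn_sdiff hpairsub w
      have hpairdeg : ∀ w, G.degOn {e1, e2} w =
          (if w ∈ (s(v,x) : Sym2 G.V) then 1 else 0) +
          (if w ∈ (s(v,x2) : Sym2 G.V) then 1 else 0) := by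
        intro w; rw [G.degOn_pair he12, hx.1, hx2.1]
      have hoddZ' : ∀ w, Odd (G.degOn Z' w) ↔ (w = x ∨ w = x2) := by
        intro w
        have hZw : G.degOn Z w % 2 = 0 := Nat.even_iff.mp (hZev w)
        have h1 := hdegZ' w
        have h2 := hpairdeg w
        simp only [Sym2.mem_iff] at h2
        rw [Nat.odd_iff]
        constructor
        · intro hodd
          by_contra hor
          push_neg at hor
          obtain ⟨hwx, hwx2⟩ := hor
          by_cases hwv : w = v
          · rw [if_pos (Or.inl hwv), if_pos (Or.inl hwv)] at h2; omega
          · rw [if_neg (by tauto), if_neg (by tauto)] at h2; omega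
        · rintro (rfl | rfl)
          · rw [if_pos (Or.inr rfl),
              if_neg (by rintro (h | h); exacts [hx.2 h, hxx h])] at h2
            omega
          · rw [if_neg (by rintro (h | h); exacts [hx2.2 h, hxx h.symm]),
              if_pos (Or.inr rfl)] at h2
            omega
      have hZ'v : 2 ≤ G.degOn Z' v := by
        have h1 := hdegZ' v
        have h2 := hpairdeg v
        rw [if_pos (Sym2.mem_mk_left _ _), if_pos (Sym2.mem_mk_left _ _)] at h2
        omega
      have hvx : v ≠ x := fun h => hx.2 h.symm
      have hvx2 : v ≠ x2 := fun h => hx2.2 h.symm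
      have hxodd : Odd (G.degOn Z' x) := (hoddZ' x).mpr (Or.inl rfl)
      have hreach : G.ReachOn Z' x x2 :=
        G.reach_of_odd hxodd (by
          intro u hux hux2 hodd
          rcases (hoddZ' u).mp hodd with h | h
          exacts [hux h, hux2 h])
      obtain ⟨Q, hQZ', hQ⟩ := G.exists_join hreach
      have hQodd : ∀ u, Odd (G.degOn Q u) ↔ (u = x ∨ u = x2) := by
        intro u
        rw [hQ u]
        by_cases h1 : u = x <;> by_cases h2 : u = x2 <;> simp [h1, h2] <;> try tauto
      have hZ'Q : Z' \ Q = ∅ := by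
        by_contra hne'
        have hsub : Z' \ Q ⊆ Z := (Set.diff_subset).trans (hZ' ▸ Set.diff_subset)
        have hevQ : ∀ u, Even (G.degOn (Z' \ Q) u) := by
          intro u
          have hd := G.degOn_sdiff hQZ' u
          have ho1 := hoddZ' u
          have ho2 := hQodd u
          rw [Nat.odd_iff] at ho1 ho2
          rw [← ho1] at ho2
          rw [Nat.even_iff]
          omega
        have := hmin _ hsub (Set.nonempty_iff_ne_empty.mpr hne') hevQ
        have he1mem : e1 ∈ Z' \ Q := this.symm ▸ he1Z
        exact he1mem.1.2 (Or.inl rfl)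
      have hQeq : Q = Z' := Set.Subset.antisymm hQZ' (Set.diff_eq_empty.mp hZ'Q)
      -- pick an edge of Z' at v
      obtain ⟨g1, hg1Z', hg1v⟩ := G.degOn_pos.mp (by omega : 0 < G.degOn Z' v)
      have hg1Z : g1 ∈ Z := (show g1 ∈ Z \ {e1, e2} from hg1Z').1
      have hg1ne : g1 ∉ ({e1, e2} : Set G.E) := (show g1 ∈ Z \ {e1, e2} from hg1Z').2
      obtain ⟨w1, hw1⟩ : ∃ w1, G.ends g1 = s(v, w1) ∧ w1 ≠ v := by
        obtain ⟨p, q, hpq, hends⟩ := G.ends_rep g1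
        rw [hends, Sym2.mem_iff] at hg1v
        rcases hg1v with rfl | rfl
        · exact ⟨q, hends, fun h => hpq h.symm⟩
        · exact ⟨p, by rw [hends, Sym2.eq_swap], hpq⟩
      set Z'' := Z' \ {g1} with hZ''
      have hg1singleodd : ∀ u, Odd (G.degOn {g1} u) ↔ (u = v ∨ u = w1) := by
        intro u
        simp only [G.degOn_singleton, hw1.1, Sym2.mem_iff]
        by_cases h : u = v ∨ u = w1 <;> simp [h]
      have hZ''odd : ∀ u, Odd (G.degOn Z'' u) ↔
          ¬ ((u = x ∨ u = x2) ↔ (u = v ∨ u = w1)) := by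
        intro u
        have hd := G.degOn_sdiff (Set.singleton_subset_iff.mpr hg1Z') u
        rw [← hZ''] at hd
        have ho1 := hoddZ' u
        have ho2 := hg1singleodd u
        rw [Nat.odd_iff] at ho1 ho2
        rw [← ho1, ← ho2, Nat.odd_iff]
        omega
      have hvZ''odd : Odd (G.degOn Z'' v) := by
        rw [hZ''odd]
        intro hiff
        rcases hiff.mpr (Or.inl rfl) with h | h
        exacts [hvx h, hvx2 h]
      obtain ⟨y, hyv, hyodd, hyreach⟩ := G.exists_odd_reach hvZ''odd
      have hy3 : y = x ∨ y = x2 ∨ y = w1 := by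
        by_contra hcon
        push_neg at hcon
        obtain ⟨hyx, hyx2, hyw1⟩ := hcon
        rw [hZ''odd] at hyodd
        apply hyodd
        constructor
        · rintro (h | h); exacts [absurd h hyx, absurd h hyx2]
        · rintro (h | h); exacts [absurd h hyv, absurd h hyw1]
      obtain ⟨R, hRZ'', hR⟩ := G.exists_join hyreach
      have hRodd : ∀ u, Odd (G.degOn R u) ↔ (u = v ∨ u = y) := by
        intro u
        rw [hR u]
        by_cases h1 : u = v <;> by_cases h2 : u = y <;> simp [h1, h2] <;> tauto
      have hRZ' : R ⊆ Z' := hRZ''.trans Set.diff_subset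
      -- helper to conclude
      have key : ∀ (g : G.E), g ∈ Z → g ∉ R → (∀ u, Odd (G.degOn {g} u) ↔ (u = v ∨ u = y)) →
          (∃ h ∈ Z, h ∉ R ∪ {g}) → False := by
        intro g hgZ hgR hgodd ⟨h', hh'Z, hh'⟩
        have hYsub : R ∪ {g} ⊆ Z := Set.union_subset (hRZ'.trans (hZ' ▸ Set.diff_subset))
          (Set.singleton_subset_iff.mpr hgZ)
        have hYev : ∀ u, Even (G.degOn (R ∪ {g}) u) := by
          intro u
          rw [G.degOn_union (Set.disjoint_singleton_right.mpr hgR) u]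
          have h1 := hRodd u
          have h2 := hgodd u
          rw [Nat.odd_iff] at h1 h2
          rw [← h1] at h2
          rw [Nat.even_iff]
          omega
        have := hmin _ hYsub ⟨g, Or.inr rfl⟩ hYev
        exact hh' (this ▸ hh'Z)
      have he1notR : e1 ∉ R := fun h => (hRZ' h).2 (Or.inl rfl)
      have he2notR : e2 ∉ R := fun h => (hRZ' h).2 (Or.inr rfl)
      have hg1notR : g1 ∉ R := fun h => (hRZ'' h).2 rfl
      rcases hy3 with rfl | rfl | rfl
      · -- y = x : use e1
        refine key e1 he1Z he1notR ?_ ⟨g1, hg1Z, ?_⟩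
        · intro u
          simp only [G.degOn_singleton, hx.1, Sym2.mem_iff]
          by_cases h : u = v ∨ u = y <;> simp [h]
        · rintro (h | h)
          exacts [hg1notR h, hg1ne (by rw [h]; exact Or.inl rfl)]
      · -- y = x2 : use e2
        refine key e2 he2Z he2notR ?_ ⟨g1, hg1Z, ?_⟩
        · intro u
          simp only [G.degOn_singleton, hx2.1, Sym2.mem_iff]
          by_cases h : u = v ∨ u = y <;> simp [h]
        · rintro (h | h)
          exacts [hg1notR h, hg1ne (by rw [h]; exact Or.inr rfl)]
      · -- y = w1 : use g1
        refine key g1 hg1Z hg1notR hg1singleodd ⟨e1, he1Z, ?_⟩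
        rintro (h | h)
        exacts [he1notR h, hg1ne (by rw [← h]; exact Or.inl rfl)]
  · -- connectivity
    intro e he f hf a b ha hb
    have hcomp : G.compOf Z a = Z := by
      refine hmin _ (G.compOf_subset Z a) ⟨e, he, a, ha, Relation.ReflTransGen.refl⟩ ?_
      intro w
      by_cases hr : G.ReachOn Z a w
      · rw [G.degOn_compOf_of_reach hr]; exact hZev w
      · rw [G.degOn_compOf_of_not_reach hr]; exact Even.zero
    have hfc : f ∈ G.compOf Z a := hcomp.symm ▸ hf
    obtain ⟨-, c, hc, hrc⟩ := hfc
    exact hrc.trans (G.reach_of_mem_ends hf hc hb)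

end MGraph
namespace MGraph

variable (G : MGraph)

lemma degOn_cycle_even {C : Set G.E} (hC : G.IsCycle C) (v : G.V) :
    Even (G.degOn C v) := by
  rcases hC.2.1 v with h | h <;> rw [h] <;> decide

lemma degOn_cycle_two {C : Set G.E} (hC : G.IsCycle C) {v : G.V}
    (hv : v ∈ G.VertexSetOf C) : G.degOn C v = 2 := by
  obtain ⟨e, he, hve⟩ := hv
  have : 0 < G.degOn C v := G.degOn_pos.mpr ⟨e, he, hve⟩
  rcases hC.2.1 v with h | h <;> omega

/-- Veblen: every edge set with all degrees even admits a cycle decomposition. -/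
lemma veblen_aux (n : ℕ) : ∀ F : Set G.E, F.ncard = n → (∀ v, Even (G.degOn F v)) →
    ∃ D, G.IsCycleDecompOn F D := by
  have := G.finE
  induction n using Nat.strong_induction_on with
  | _ n ih =>
  intro F hn hev
  by_cases hF : F.Nonempty
  · obtain ⟨C, hCF, hC⟩ := G.exists_cycle hF hev
    have hd : ∀ v, G.degOn F v = G.degOn (F \ C) v + G.degOn C v :=
      fun v => G.degOn_sdiff hCF v
    have hev' : ∀ v, Even (G.degOn (F \ C) v) := by
      intro v
      have h1 := hev v
      have h2 := G.degOn_cycle_even hC v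
      have h3 := hd v
      rw [Nat.even_iff] at h1 h2 ⊢
      omega
    have hlt : (F \ C).ncard < n := by
      rw [← hn]
      refine Set.ncard_lt_ncard ?_ (Set.toFinite _)
      obtain ⟨e, he⟩ := hC.1
      exact ⟨Set.diff_subset, fun hsub => (hsub (hCF he)).2 he⟩
    obtain ⟨D', hD'⟩ := ih _ hlt (F \ C) rfl hev'
    refine ⟨insert C D', ?_, ?_⟩
    · rintro C' (rfl | hC')
      · exact ⟨hC, hCF⟩
      · exact ⟨(hD'.1 C' hC').1, ((hD'.1 C' hC').2).trans Set.diff_subset⟩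
    · intro e he
      by_cases heC : e ∈ C
      · refine ⟨C, ⟨Or.inl rfl, heC⟩, ?_⟩
        rintro C' ⟨(rfl | hC'), heC'⟩
        · rfl
        · exact absurd heC' (fun h => ((hD'.1 C' hC').2 h).2 heC)
      · obtain ⟨C', hC', huniq⟩ := hD'.2 e ⟨he, heC⟩
        refine ⟨C', ⟨Or.inr hC'.1, hC'.2⟩, ?_⟩
        rintro C'' ⟨(rfl | hC''), heC''⟩
        · exact absurd heC'' heC
        · exact huniq C'' ⟨hC'', heC''⟩
  · refine ⟨∅, fun C hC => absurd hC (Set.notMem_empty C), ?_⟩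
    intro e he
    exact absurd ⟨e, he⟩ hF

lemma veblen (F : Set G.E) (hev : ∀ v, Even (G.degOn F v)) :
    ∃ D, G.IsCycleDecompOn F D :=
  G.veblen_aux F.ncard F rfl hev

lemma decomp_union {F1 F2 : Set G.E} {D1 D2 : Set (Set G.E)}
    (h1 : G.IsCycleDecompOn F1 D1) (h2 : G.IsCycleDecompOn F2 D2)
    (hd : Disjoint F1 F2) :
    G.IsCycleDecompOn (F1 ∪ F2) (D1 ∪ D2) ∧ (D1 ∪ D2).ncard = D1.ncard + D2.ncard := by
  have := G.finE
  have hDdisj : Disjoint D1 D2 := by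
    rw [Set.disjoint_left]
    intro C hC1 hC2
    obtain ⟨e, he⟩ := ((h1.1 C hC1).1).1
    exact Set.disjoint_left.mp hd ((h1.1 C hC1).2 he) ((h2.1 C hC2).2 he)
  constructor
  · constructor
    · rintro C (hC | hC)
      · exact ⟨(h1.1 C hC).1, ((h1.1 C hC).2).trans Set.subset_union_left⟩
      · exact ⟨(h2.1 C hC).1, ((h2.1 C hC).2).trans Set.subset_union_right⟩
    · rintro e (he | he)
      · obtain ⟨C, hC, huniq⟩ := h1.2 e he
        refine ⟨C, ⟨Or.inl hC.1, hC.2⟩, ?_⟩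
        rintro C' ⟨(hC' | hC'), heC'⟩
        · exact huniq C' ⟨hC', heC'⟩
        · exact absurd ((h2.1 C' hC').2 heC') (fun h => Set.disjoint_left.mp hd he h)
      · obtain ⟨C, hC, huniq⟩ := h2.2 e he
        refine ⟨C, ⟨Or.inr hC.1, hC.2⟩, ?_⟩
        rintro C' ⟨(hC' | hC'), heC'⟩
        · exact absurd ((h1.1 C' hC').2 heC') (fun h => Set.disjoint_left.mp hd h he)
        · exact huniq C' ⟨hC', heC'⟩
  · exact Set.ncard_union_eq hDdisj (Set.toFinite _) (Set.toFinite _)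

lemma decomp_singleton {C : Set G.E} (hC : G.IsCycle C) :
    G.IsCycleDecompOn C {C} := by
  constructor
  · rintro C' rfl
    exact ⟨hC, le_refl _⟩
  · intro e he
    exact ⟨C, ⟨rfl, he⟩, by rintro C' ⟨rfl, -⟩; rfl⟩

lemma decomp_card_le {F : Set G.E} {D : Set (Set G.E)} (h : G.IsCycleDecompOn F D) :
    D.ncard ≤ Nat.card G.E := by
  have := G.finE
  by_cases hD : D = ∅
  · simp [hD]
  · obtain ⟨C0, hC0⟩ := Set.nonempty_iff_ne_empty.mpr hD
    obtain ⟨e0, -⟩ := (h.1 C0 hC0).1.1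
    have hex : ∀ C ∈ D, ∃ e, e ∈ C := fun C hC => (h.1 C hC).1.1
    choose f hf using hex
    set g : Set G.E → G.E := fun C => if hC : C ∈ D then f C hC else e0 with hg
    have hinj : Set.InjOn g D := by
      intro C hC C' hC' hgeq
      rw [hg] at hgeq
      simp only [dif_pos hC, dif_pos hC'] at hgeq
      have he : f C hC ∈ F := (h.1 C hC).2 (hf C hC)
      obtain ⟨K, -, huniq⟩ := h.2 _ he
      have h1 := huniq C ⟨hC, hf C hC⟩
      have h2 := huniq C' ⟨hC', hgeq ▸ hf C' hC'⟩
      rw [h1, h2]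
    calc D.ncard = (g '' D).ncard := (Set.ncard_image_of_injOn hinj).symm
      _ ≤ (Set.univ : Set G.E).ncard := Set.ncard_le_ncard (Set.subset_univ _) (Set.toFinite _)
      _ = Nat.card G.E := Set.ncard_univ _

end MGraph
namespace MGraph

variable (G : MGraph)

lemma euler_even (hE : G.IsEulerian) (v : G.V) : Even (G.degOn Set.univ v) := by
  have := G.finE; have := G.finV
  have : Fintype G.E := Fintype.ofFinite _
  obtain ⟨vs, es, hlen, hends, hclosed, hnodup, hall⟩ := hE
  cases isEmpty_or_nonempty G.E with
  | inl hemp =>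
    have h0 : {e | e ∈ Set.univ ∧ v ∈ G.ends e} = ∅ := Set.eq_empty_of_isEmpty _
    rw [degOn_eq, h0, Set.ncard_empty]
    exact Even.zero
  | inr hne =>
    obtain ⟨e0⟩ := hne
    obtain ⟨v0, w0, -, -⟩ := G.ends_rep e0
    set n := es.length with hn
    have hnpos : 0 < n := List.length_pos_iff.mpr (List.ne_nil_of_mem (hall e0))
    -- basic index facts
    have hvs : ∀ i, i < n + 1 → vs[i]? = some (vs.getD i v0) := by
      intro i hi
      have hi' : i < vs.length := by omega
      rw [List.getElem?_eq_getElem hi', List.getD_eq_getElem vs v0 hi']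
    have hes : ∀ i, i < n → es[i]? = some (es.getD i e0) := by
      intro i hi
      rw [List.getElem?_eq_getElem hi, List.getD_eq_getElem es e0 hi]
    have hEnds : ∀ i, i < n →
        G.ends (es.getD i e0) = s(vs.getD i v0, vs.getD (i + 1) v0) := by
      intro i hi
      exact hends i _ _ _ (hes i hi) (hvs i (by omega)) (hvs (i + 1) (by omega))
    have hNe : ∀ i, i < n → vs.getD i v0 ≠ vs.getD (i + 1) v0 := by
      intro i hi heq
      exact G.noLoop (es.getD i e0) (by rw [hEnds i hi, heq]; exact Sym2.mk_isDiag_iff.mpr rfl)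
    -- degree as a count of indices
    have hcard : G.degOn Set.univ v =
        ((Finset.range n).filter (fun i => v ∈ G.ends (es.getD i e0))).card := by
      have hset : {e | e ∈ Set.univ ∧ v ∈ G.ends e} =
          ↑(Finset.univ.filter (fun e => v ∈ G.ends e)) := by
        ext e; simp
      rw [degOn_eq, hset, Set.ncard_coe_finset]
      refine (Finset.card_bij (fun i _ => es.getD i e0) ?_ ?_ ?_).symm
      · intro i hi
        simp only [Finset.mem_filter, Finset.mem_range] at hi
        exact Finset.mem_filter.mpr ⟨Finset.mem_univ _, hi.2⟩
      · intro i hi j hj heq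
        simp only [Finset.mem_filter, Finset.mem_range] at hi hj
        have heq' : es.getD i e0 = es.getD j e0 := heq
        rw [List.getD_eq_getElem es e0 hi.1, List.getD_eq_getElem es e0 hj.1] at heq'
        exact hnodup.getElem_inj_iff.mp heq'
      · intro e he
        simp only [Finset.mem_filter, Finset.mem_univ, true_and] at he
        obtain ⟨i, hilt, hie⟩ := List.mem_iff_getElem.mp (hall e)
        refine ⟨i, ?_, ?_⟩
        · simp only [Finset.mem_filter, Finset.mem_range]
          rw [List.getD_eq_getElem es e0 hilt, hie]
          exact ⟨hilt, he⟩
        · show es.getD i e0 = e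
          rw [List.getD_eq_getElem es e0 hilt, hie]
    set p : ℕ → Prop := fun j => vs.getD j v0 = v with hp
    have hsplit : ((Finset.range n).filter (fun i => v ∈ G.ends (es.getD i e0))).card =
        ((Finset.range n).filter (fun i => p i)).card +
        ((Finset.range n).filter (fun i => p (i + 1))).card := by
      have heq : (Finset.range n).filter (fun i => v ∈ G.ends (es.getD i e0)) =
          (Finset.range n).filter (fun i => p i ∨ p (i + 1)) := by
        refine Finset.filter_congr ?_
        intro i hi
        rw [Finset.mem_range] at hi
        rw [hEnds i hi, Sym2.mem_iff, hp]
        constructor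
        · rintro (rfl | rfl)
          · exact Or.inl rfl
          · exact Or.inr rfl
        · rintro (h | h)
          · exact Or.inl h.symm
          · exact Or.inr h.symm
      rw [heq, Finset.filter_or, Finset.card_union_of_disjoint]
      rw [Finset.disjoint_filter]
      intro i hi h1 h2
      rw [Finset.mem_range] at hi
      exact hNe i hi (by rw [hp] at h1 h2; rw [h1, h2])
    -- shift the second count
    have hshift : ((Finset.range n).filter (fun i => p (i + 1))).card =
        ((Finset.Ico 1 (n + 1)).filter (fun j => p j)).card := by
      refine Finset.card_bij (fun i _ => i + 1) ?_ ?_ ?_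
      · intro i hi
        simp only [Finset.mem_filter, Finset.mem_range] at hi
        simp only [Finset.mem_filter, Finset.mem_Ico]
        exact ⟨⟨by omega, by omega⟩, hi.2⟩
      · intro i _ j _ h
        have h' : i + 1 = j + 1 := h
        omega
      · intro j hj
        simp only [Finset.mem_filter, Finset.mem_Ico] at hj
        refine ⟨j - 1, ?_, ?_⟩
        · simp only [Finset.mem_filter, Finset.mem_range]
          exact ⟨by omega, by rw [Nat.sub_add_cancel hj.1.1]; exact hj.2⟩
        · show j - 1 + 1 = j
          omega
    -- boundary values agree
    have hbound : vs.getD 0 v0 = vs.getD n v0 := by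
      have h1 : vs.head? = some (vs.getD 0 v0) := by
        rw [List.head?_eq_getElem?]
        exact hvs 0 (by omega)
      have h2 : vs.getLast? = some (vs.getD n v0) := by
        rw [List.getLast?_eq_getElem?, hlen]
        simp only [Nat.add_sub_cancel]
        exact hvs n (by omega)
      rw [h1, h2] at hclosed
      exact Option.some.inj hclosed
    -- decompose both counts
    have hIco0 : Finset.range n = insert 0 (Finset.Ico 1 n) := by
      ext i; simp only [Finset.mem_range, Finset.mem_insert, Finset.mem_Ico]; omega
    have hIco1 : Finset.Ico 1 (n + 1) = insert n (Finset.Ico 1 n) := by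
      ext i; simp only [Finset.mem_insert, Finset.mem_Ico]; omega
    have hc0 : ((Finset.range n).filter (fun j => p j)).card =
        (if p 0 then 1 else 0) + ((Finset.Ico 1 n).filter (fun j => p j)).card := by
      rw [hIco0, Finset.filter_insert]
      by_cases h : p 0
      · rw [if_pos h, if_pos h]
        rw [Finset.card_insert_of_notMem (fun hmem => by
          have hmem' := Finset.mem_of_mem_filter _ hmem
          rw [Finset.mem_Ico] at hmem'
          omega)]
        omega
      · rw [if_neg h, if_neg h, Nat.zero_add]
    have hcn : ((Finset.Ico 1 (n + 1)).filter (fun j => p j)).card =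
        (if p n then 1 else 0) + ((Finset.Ico 1 n).filter (fun j => p j)).card := by
      rw [hIco1, Finset.filter_insert]
      by_cases h : p n
      · rw [if_pos h, if_pos h]
        rw [Finset.card_insert_of_notMem (fun hmem => by
          have hmem' := Finset.mem_of_mem_filter _ hmem
          rw [Finset.mem_Ico] at hmem'
          omega)]
        omega
      · rw [if_neg h, if_neg h, Nat.zero_add]
    have hpeq : (if p 0 then 1 else 0) = (if p n then 1 else 0) := by
      have : p 0 ↔ p n := by rw [hp]; simp only []; rw [hbound]
      by_cases h : p 0
      · rw [if_pos h, if_pos (this.mp h)]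
      · rw [if_neg h, if_neg (fun hh => h (this.mpr hh))]
    rw [hcard, hsplit, hshift, hc0, hcn, Nat.even_iff]
    omega

end MGraph
namespace MGraph

variable (G : MGraph)

lemma other_end {e : G.E} {v : G.V} (hv : v ∈ G.ends e) :
    ∃ w, G.ends e = s(v, w) ∧ w ≠ v := by
  obtain ⟨p, q, hpq, hends⟩ := G.ends_rep e
  rw [hends, Sym2.mem_iff] at hv
  rcases hv with rfl | rfl
  · exact ⟨q, hends, fun h => hpq h.symm⟩
  · exact ⟨p, by rw [hends, Sym2.eq_swap], hpq⟩

/-- In a cycle, any two vertices other than `b` are joined avoiding `b`. -/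
lemma cycle_reach_avoid {C : Set G.E} (hC : G.IsCycle C) {a c b : G.V}
    (ha : a ∈ G.VertexSetOf C) (hc : c ∈ G.VertexSetOf C) (hab : a ≠ b) (hcb : c ≠ b) :
    G.ReachOn (C \ {g | b ∈ G.ends g}) a c := by
  have := G.finE
  obtain ⟨ea, hea, haea⟩ := ha
  obtain ⟨ec, hec, hcec⟩ := hc
  by_cases hb : G.degOn C b = 0
  · have hCeq : C \ {g | b ∈ G.ends g} = C := by
      ext g
      simp only [Set.mem_diff, Set.mem_setOf_eq, and_iff_left_iff_imp]
      intro hg hbg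
      have : 0 < G.degOn C b := G.degOn_pos.mpr ⟨g, hg, hbg⟩
      omega
    rw [hCeq]
    exact hC.2.2 ea hea ec hec a c haea hcec
  · have hb2 : G.degOn C b = 2 := by rcases hC.2.1 b with h | h <;> omega
    set Eb := {g | g ∈ C ∧ b ∈ G.ends g} with hEbdef
    have hEbsub : Eb ⊆ C := fun g hg => hg.1
    have hEbcard : Eb.ncard = 2 := hb2
    obtain ⟨e, f, hef, hEb⟩ := Set.ncard_eq_two.mp hEbcard
    have heC : e ∈ C := hEbsub (hEb ▸ (by simp : e ∈ ({e, f} : Set G.E)))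
    have hfC : f ∈ C := hEbsub (hEb ▸ (by simp : f ∈ ({e, f} : Set G.E)))
    have hbe : b ∈ G.ends e := (show e ∈ Eb from hEb ▸ (by simp)).2
    have hbf : b ∈ G.ends f := (show f ∈ Eb from hEb ▸ (by simp)).2
    obtain ⟨p, hp, hpb⟩ := G.other_end hbe
    obtain ⟨q, hq, hqb⟩ := G.other_end hbf
    have hdiffeq : C \ {g | b ∈ G.ends g} = C \ Eb := by
      ext g
      simp only [Set.mem_diff, Set.mem_setOf_eq, hEbdef]
      tauto
    rw [hdiffeq]
    set Z' := C \ Eb with hZ'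
    have hdC : ∀ w, G.degOn C w = G.degOn Z' w + G.degOn Eb w :=
      fun w => G.degOn_sdiff hEbsub w
    have hEbpair : ∀ w, G.degOn Eb w =
        (if w ∈ (s(b,p) : Sym2 G.V) then 1 else 0) +
        (if w ∈ (s(b,q) : Sym2 G.V) then 1 else 0) := by
      intro w
      rw [hEb, G.degOn_pair hef, hp, hq]
    have hZ'b : G.degOn Z' b = 0 := by
      have h1 := hdC b
      have h2 := hEbpair b
      rw [if_pos (Sym2.mem_mk_left _ _), if_pos (Sym2.mem_mk_left _ _)] at h2
      omega
    by_cases hpq : p = q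
    · -- C = {e, f}; a = c = p
      subst hpq
      have hedgesp : {g | g ∈ C ∧ p ∈ G.ends g} = Eb := by
        have hsub : Eb ⊆ {g | g ∈ C ∧ p ∈ G.ends g} := by
          rintro g hg
          rw [hEb] at hg
          rcases hg with rfl | rfl
          · exact ⟨heC, by rw [hp]; exact Sym2.mem_mk_right _ _⟩
          · exact ⟨hfC, by rw [hq]; exact Sym2.mem_mk_right _ _⟩
        have hcard : {g | g ∈ C ∧ p ∈ G.ends g}.ncard ≤ 2 := by
          have := G.degOn_pos (F := C) (v := p)
          rcases hC.2.1 p with h | h <;> rw [← degOn_eq] <;> omega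
        exact (Set.eq_of_subset_of_ncard_le hsub (by rw [hEbcard]; exact hcard)
          (Set.toFinite _)).symm
      have hCeq : C = Eb := by
        by_contra hne
        have hex : ∃ g ∈ C, g ∉ Eb := by
          by_contra hcon
          push_neg at hcon
          exact hne (Set.Subset.antisymm hcon hEbsub)
        obtain ⟨g, hgC, hgEb⟩ := hex
        obtain ⟨d, d2, -, hgends⟩ := G.ends_rep g
        have hd : d ∈ G.ends g := by rw [hgends]; exact Sym2.mem_mk_left _ _
        have hdb : d ≠ b := by
          rintro rfl
          exact hgEb ⟨hgC, hd⟩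
        have hdp : d ≠ p := by
          rintro rfl
          exact hgEb (hedgesp ▸ (⟨hgC, hd⟩ : g ∈ {g | g ∈ C ∧ d ∈ G.ends g}))
        have hinv : ∀ y, G.ReachOn C d y → y ≠ b ∧ y ≠ p := by
          intro y hy
          induction hy with
          | refl => exact ⟨hdb, hdp⟩
          | tail hxy hadj ih =>
            obtain ⟨h', hh'C, hh'ends⟩ := hadj
            rename_i x y'
            constructor
            · intro hyb
              have hmem : h' ∈ Eb := ⟨hh'C, by rw [hh'ends, ← hyb]; exact Sym2.mem_mk_right _ _⟩
              rw [hEb] at hmem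
              have hends' : G.ends h' = s(b, p) := by
                rcases hmem with rfl | rfl
                exacts [hp, hq]
              rcases Sym2.eq_iff.mp (hh'ends.symm.trans hends') with ⟨hxb, -⟩ | ⟨hxp, -⟩
              · exact ih.1 hxb
              · exact ih.2 hxp
            · intro hyp
              have hmem : h' ∈ Eb := hedgesp ▸
                (⟨hh'C, by rw [hh'ends, ← hyp]; exact Sym2.mem_mk_right _ _⟩ :
                  h' ∈ {g | g ∈ C ∧ p ∈ G.ends g})
              rw [hEb] at hmem
              have hends' : G.ends h' = s(b, p) := by
                rcases hmem with rfl | rfl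
                exacts [hp, hq]
              rcases Sym2.eq_iff.mp (hh'ends.symm.trans hends') with ⟨hxb, -⟩ | ⟨hxp, -⟩
              · exact ih.1 hxb
              · exact ih.2 hxp
        exact (hinv b (hC.2.2 g hgC e heC d b hd hbe)).1 rfl
      have hap : a = p := by
        have : ea ∈ Eb := hCeq ▸ hea
        rw [hEb] at this
        rcases this with rfl | rfl
        · rw [hp, Sym2.mem_iff] at haea; tauto
        · rw [hq, Sym2.mem_iff] at haea; tauto
      have hcp : c = p := by
        have : ec ∈ Eb := hCeq ▸ hec
        rw [hEb] at this
        rcases this with rfl | rfl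
        · rw [hp, Sym2.mem_iff] at hcec; tauto
        · rw [hq, Sym2.mem_iff] at hcec; tauto
      rw [hap, hcp]
      exact Relation.ReflTransGen.refl
    · -- p ≠ q
      have hodd : ∀ w, Odd (G.degOn Z' w) ↔ (w = p ∨ w = q) := by
        intro w
        have hCw : G.degOn C w % 2 = 0 := Nat.even_iff.mp (G.degOn_cycle_even hC w)
        have h1 := hdC w
        have h2 := hEbpair w
        simp only [Sym2.mem_iff] at h2
        rw [Nat.odd_iff]
        constructor
        · intro hoddw
          by_contra hor
          push_neg at hor
          obtain ⟨hwp, hwq⟩ := hor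
          by_cases hwb : w = b
          · rw [if_pos (Or.inl hwb), if_pos (Or.inl hwb)] at h2; omega
          · rw [if_neg (by tauto), if_neg (by tauto)] at h2; omega
        · rintro (rfl | rfl)
          · rw [if_pos (Or.inr rfl),
              if_neg (by rintro (h | h); exacts [hpb h, hpq h])] at h2
            omega
          · rw [if_neg (by rintro (h | h); exacts [hqb h, hpq h.symm]),
              if_pos (Or.inr rfl)] at h2
            omega
      have hreachpq : G.ReachOn Z' p q :=
        G.reach_of_odd ((hodd p).mpr (Or.inl rfl)) (by
          intro u hup huq hoddu
          rcases (hodd u).mp hoddu with h | h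
          exacts [hup h, huq h])
      have hkey : ∀ z, (∃ g ∈ C, z ∈ G.ends g) → z ≠ b →
          (G.ReachOn Z' z p ∨ G.ReachOn Z' z q) := by
        rintro z ⟨g, hgC, hzg⟩ hzb
        have hstep : ∀ y, G.ReachOn C z y →
            (G.ReachOn Z' z y ∨ G.ReachOn Z' z p ∨ G.ReachOn Z' z q) := by
          intro y hy
          induction hy with
          | refl => exact Or.inl Relation.ReflTransGen.refl
          | tail hxy hadj ih =>
            rcases ih with hx | hrest
            · obtain ⟨h', hh'C, hh'ends⟩ := hadj
              rename_i x y'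
              by_cases hh'Eb : h' ∈ Eb
              · rw [hEb] at hh'Eb
                have hends' : G.ends h' = s(b, p) ∨ G.ends h' = s(b, q) := by
                  rcases hh'Eb with rfl | rfl
                  exacts [Or.inl hp, Or.inr hq]
                rcases hends' with hends' | hends' <;> rw [hends'] at hh'ends <;>
                  rcases Sym2.eq_iff.mp hh'ends.symm with ⟨rfl, rfl⟩ | ⟨h1, h2⟩
                · exact absurd (G.reach_deg_zero hx hZ'b) hzb
                · exact Or.inr (Or.inl (h1 ▸ hx))
                · exact absurd (G.reach_deg_zero hx hZ'b) hzb
                · exact Or.inr (Or.inr (h1 ▸ hx))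
              · exact Or.inl (hx.tail ⟨h', ⟨hh'C, hh'Eb⟩, hh'ends⟩)
            · exact Or.inr hrest
        rcases hstep b (hC.2.2 g hgC e heC z b hzg hbe) with h | h
        · exact absurd (G.reach_deg_zero h hZ'b) hzb
        · exact h
      have hA := hkey a ⟨ea, hea, haea⟩ hab
      have hC' := hkey c ⟨ec, hec, hcec⟩ hcb
      rcases hA with hA | hA <;> rcases hC' with hCc | hCc
      · exact hA.trans (G.reachOn_symm hCc)
      · exact hA.trans (hreachpq.trans (G.reachOn_symm hCc))
      · exact hA.trans ((G.reachOn_symm hreachpq).trans (G.reachOn_symm hCc))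
      · exact hA.trans (G.reachOn_symm hCc)

end MGraph

/-- an Eulerian multigraph containing two edge-disjoint cycles
with more than two common vertices has non-unique cycle number. -/
theorem cycles_sharing_three_implies_gap (G : MGraph) (hE : G.IsEulerian)
    (C1 C2 : Set G.E) (h1 : G.IsCycle C1) (h2 : G.IsCycle C2)
    (hd : Disjoint C1 C2)
    (hshare : 2 < (G.VertexSetOf C1 ∩ G.VertexSetOf C2).ncard) :
    G.c < G.nu := by
  have := G.finE
  have := G.finV
  classical
  obtain ⟨a, ha, b, hb, c, hc, hab, hac, hbc⟩ :=
    (Set.two_lt_ncard (Set.toFinite _)).mp hshare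
  obtain ⟨ha1, ha2⟩ := ha
  obtain ⟨hb1, hb2⟩ := hb
  obtain ⟨hc1, hc2⟩ := hc
  -- joins from a to c avoiding b, in each cycle
  obtain ⟨P1, hP1sub, hP1⟩ := G.exists_join (G.cycle_reach_avoid h1 ha1 hc1 hab.symm.symm hbc.symm)
  obtain ⟨P2, hP2sub, hP2⟩ := G.exists_join (G.cycle_reach_avoid h2 ha2 hc2 hab hbc.symm)
  have hP1C1 : P1 ⊆ C1 := hP1sub.trans Set.diff_subset
  have hP2C2 : P2 ⊆ C2 := hP2sub.trans Set.diff_subset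
  have hP12 : Disjoint P1 P2 := Set.disjoint_of_subset hP1C1 hP2C2 hd
  set K0 := P1 ∪ P2 with hK0
  have hK0deg : ∀ w, G.degOn K0 w = G.degOn P1 w + G.degOn P2 w :=
    fun w => G.degOn_union hP12 w
  have hK0even : ∀ w, Even (G.degOn K0 w) := by
    intro w
    rw [hK0deg w, Nat.even_iff]
    have h1' := hP1 w
    have h2' := hP2 w
    rw [Nat.odd_iff] at h1' h2'
    rw [← h1'] at h2'
    omega
  have hK0ne : K0.Nonempty := by
    have hodd : Odd (G.degOn P1 a) := (hP1 a).mpr (by simp [hac])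
    have hpos : 0 < G.degOn P1 a := by
      rcases hodd with ⟨k, hk⟩; omega
    obtain ⟨e, he, -⟩ := G.degOn_pos.mp hpos
    exact ⟨e, Or.inl he⟩
  have hK0b : G.degOn K0 b = 0 := by
    rw [MGraph.degOn_eq]
    have : {e | e ∈ K0 ∧ b ∈ G.ends e} = ∅ := by
      refine Set.eq_empty_iff_forall_notMem.mpr ?_
      rintro e ⟨he, hbe⟩
      rcases he with he | he
      · exact (hP1sub he).2 hbe
      · exact (hP2sub he).2 hbe
    rw [this, Set.ncard_empty]
  obtain ⟨K, hKK0, hK⟩ := G.exists_cycle hK0ne hK0even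
  set U := C1 ∪ C2 with hU
  have hKU : K ⊆ U := hKK0.trans (Set.union_subset_union hP1C1 hP2C2)
  have hUdeg : ∀ w, G.degOn U w = G.degOn C1 w + G.degOn C2 w :=
    fun w => G.degOn_union hd w
  have hUev : ∀ w, Even (G.degOn U w) := by
    intro w
    rw [hUdeg w]
    exact (G.degOn_cycle_even h1 w).add (G.degOn_cycle_even h2 w)
  have hUb : G.degOn U b = 4 := by
    rw [hUdeg b, G.degOn_cycle_two h1 hb1, G.degOn_cycle_two h2 hb2]
  have hKb : G.degOn K b = 0 := by
    have := G.degOn_mono hKK0 b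
    omega
  have hUKdeg : ∀ w, G.degOn U w = G.degOn (U \ K) w + G.degOn K w :=
    fun w => G.degOn_sdiff hKU w
  have hUKev : ∀ w, Even (G.degOn (U \ K) w) := by
    intro w
    have hh1 := hUev w
    have hh2 := G.degOn_cycle_even hK w
    have hh3 := hUKdeg w
    rw [Nat.even_iff] at hh1 hh2 ⊢
    omega
  have hUKb : G.degOn (U \ K) b = 4 := by
    have := hUKdeg b
    omega
  obtain ⟨D', hD'⟩ := G.veblen (U \ K) hUKev
  have hD'2 : 2 ≤ D'.ncard := by
    by_contra hlt
    push_neg at hlt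
    interval_cases h : D'.ncard
    · have hD'emp : D' = ∅ := (Set.ncard_eq_zero (Set.toFinite _)).mp h
      obtain ⟨e, he, -⟩ := G.degOn_pos.mp (show 0 < G.degOn (U \ K) b by omega)
      obtain ⟨C', hC', -⟩ := hD'.2 e he
      rw [hD'emp] at hC'
      exact hC'.1
    · obtain ⟨C', hC'eq⟩ := Set.ncard_eq_one.mp h
      have hsub : U \ K ⊆ C' := by
        intro e he
        obtain ⟨C'', hC'', -⟩ := hD'.2 e he
        have : C'' = C' := by rw [hC'eq] at hC''; exact hC''.1
        exact this ▸ hC''.2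
      have hsub2 : C' ⊆ U \ K := (hD'.1 C' (by rw [hC'eq]; rfl)).2
      have hC'cyc : G.IsCycle C' := (hD'.1 C' (by rw [hC'eq]; rfl)).1
      have : G.degOn C' b = 4 := by
        have heq : C' = U \ K := Set.Subset.antisymm hsub2 hsub
        rw [heq]
        exact hUKb
      rcases hC'cyc.2.1 b with hh | hh <;> omega
  -- decomposition of U into at least three cycles
  obtain ⟨hDU, hDUcard⟩ := G.decomp_union (G.decomp_singleton hK) hD' Set.disjoint_sdiff_right
  rw [Set.union_diff_cancel hKU] at hDU
  -- decomposition of U into exactly {C1, C2}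
  obtain ⟨hD12, hD12card⟩ := G.decomp_union (G.decomp_singleton h1) (G.decomp_singleton h2) hd
  -- rest of the graph
  have hRev : ∀ w, Even (G.degOn (Set.univ \ U) w) := by
    intro w
    have hh1 := G.euler_even hE w
    have hh2 := hUev w
    have hh3 := G.degOn_sdiff (Set.subset_univ U) w
    rw [Nat.even_iff] at hh1 hh2 ⊢
    omega
  obtain ⟨DR, hDR⟩ := G.veblen (Set.univ \ U) hRev
  have hUdisjR : Disjoint U (Set.univ \ U) := Set.disjoint_sdiff_right
  obtain ⟨hsmall, hsmallcard⟩ := G.decomp_union hD12 hDR hUdisjR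
  obtain ⟨hbig, hbigcard⟩ := G.decomp_union hDU hDR hUdisjR
  rw [Set.union_diff_cancel (Set.subset_univ U)] at hsmall hbig
  -- conclude
  set S := {n | ∃ D, G.IsCycleDecompOn Set.univ D ∧ D.ncard = n} with hS
  have hcle : G.c ≤ ({C1} ∪ {C2} : Set (Set G.E)).ncard + DR.ncard :=
    Nat.sInf_le ⟨_, hsmall, hsmallcard⟩
  have hbd : ∀ n ∈ S, n ≤ Nat.card G.E := by
    rintro n ⟨D, hD, rfl⟩
    exact G.decomp_card_le hD
  have hnuge : ({K} ∪ D' : Set (Set G.E)).ncard + DR.ncard ≤ G.nu :=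
    le_csSup ⟨Nat.card G.E, fun n hn => hbd n hn⟩ ⟨_, hbig, hbigcard⟩
  have hc12 : ({C1} ∪ {C2} : Set (Set G.E)).ncard = 2 := by
    rw [hD12card, Set.ncard_singleton, Set.ncard_singleton]
  have hKD' : ({K} ∪ D' : Set (Set G.E)).ncard = 1 + D'.ncard := by
    rw [hDUcard, Set.ncard_singleton]
  omega
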